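/- Let p be a prime and α a positive integer. Every pair of adjacent vertices of G_{ℤ/p^αℤ} dominates the graph; consequently, in any strong edge coloring of G_{ℤ/p^αℤ} all edges receive distinct colors, and the strong chromatic index of G_{ℤ/p^αℤ} equals (1/2)·p^(2α-1)·(p-1). -/

import Mathlib

/-- The unitary Cayley graph of a commutative ring: `a` is adjacent to `b`
iff `a ≠ b` and `a - b` is a unit. -/
def unitaryCayley (X : Type*) [CommRing X] : SimpleGraph X where
  Adj a b := a ≠ b ∧ IsUnit (a - b)
  symm := by
    constructor
    rintro a b ⟨h1, h2⟩
    exact ⟨h1.symm, neg_sub a b ▸ h2.neg⟩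
  loopless := by constructor; rintro a ⟨h, _⟩; exact h rfl

/-- An edge coloring is strong if any two distinct edges whose endpoints coincide or are
adjacent receive different colors. -/
def IsStrongEdgeColoring {V : Type*} (G : SimpleGraph V) {k : ℕ}
    (C : G.edgeSet → Fin k) : Prop :=
  ∀ e f : G.edgeSet, e ≠ f →
    (∃ v w, v ∈ (e : Sym2 V) ∧ w ∈ (f : Sym2 V) ∧ (v = w ∨ G.Adj v w)) → C e ≠ C f

/-- The strong chromatic index: the least number of colors in a strong edge coloring. -/
noncomputable def strongChromaticIndex {V : Type*} (G : SimpleGraph V) : ℕ :=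
  sInf {k | ∃ C : G.edgeSet → Fin k, IsStrongEdgeColoring G C}

/-! ### Auxiliary lemmas -/

lemma UCaux.edge_rep {V : Type*} (G : SimpleGraph V) (e : G.edgeSet) :
    ∃ a b, G.Adj a b ∧ (e : Sym2 V) = s(a, b) := by
  obtain ⟨e, he⟩ := e
  induction e using Sym2.ind with
  | _ a b => exact ⟨a, b, he, rfl⟩

/-- Units of a monoid are equivalent to the subtype of unit elements. -/
noncomputable def UCaux.unitsEquivSubtype (M : Type*) [Monoid M] : Mˣ ≃ {x : M // IsUnit x} where
  toFun u := ⟨u, u.isUnit⟩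
  invFun x := x.2.unit
  left_inv u := Units.ext (IsUnit.unit_spec u.isUnit)
  right_inv x := Subtype.ext x.2.unit_spec

lemma UCaux.isUnit_iff (p α : ℕ) (hp : p.Prime) (hα : 0 < α) (x : ZMod (p ^ α)) :
    IsUnit x ↔ ¬ p ∣ x.val := by
  haveI : NeZero (p ^ α) := ⟨(pow_pos hp.pos α).ne'⟩
  have h := ZMod.isUnit_iff_coprime x.val (p ^ α)
  rw [show ((x.val : ZMod (p ^ α))) = x from ZMod.natCast_rightInverse x] at h
  rw [h, Nat.coprime_pow_right_iff hα, Nat.coprime_comm]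
  exact hp.coprime_iff_not_dvd

lemma UCaux.dom (p α : ℕ) (hp : p.Prime) (hα : 0 < α) :
    ∀ a b : ZMod (p ^ α), (unitaryCayley (ZMod (p ^ α))).Adj a b →
      ∀ v, v = a ∨ v = b ∨ (unitaryCayley (ZMod (p ^ α))).Adj v a ∨
        (unitaryCayley (ZMod (p ^ α))).Adj v b := by
  haveI : NeZero (p ^ α) := ⟨(pow_pos hp.pos α).ne'⟩
  intro a b hab v
  by_cases hva : v = a
  · exact Or.inl hva
  by_cases hvb : v = b
  · exact Or.inr (Or.inl hvb)
  right; right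
  by_contra hcon
  push_neg at hcon
  obtain ⟨h1, h2⟩ := hcon
  have hna : ¬ IsUnit (v - a) := fun h => h1 ⟨hva, h⟩
  have hnb : ¬ IsUnit (v - b) := fun h => h2 ⟨hvb, h⟩
  have hna' : ¬ IsUnit (a - v) := fun h => hna (by simpa using (neg_sub a v ▸ h.neg))
  rw [UCaux.isUnit_iff p α hp hα, not_not] at hna' hnb
  have hd : p ∣ ((a - v) + (v - b)).val := by
    rw [ZMod.val_add]
    exact (Nat.dvd_mod_iff (dvd_pow_self p hα.ne')).mpr (Nat.dvd_add hna' hnb)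
  rw [sub_add_sub_cancel] at hd
  exact ((UCaux.isUnit_iff p α hp hα _).mp hab.2) hd

lemma UCaux.inj (p α : ℕ) (hp : p.Prime) (hα : 0 < α) :
    ∀ (k : ℕ) (C : (unitaryCayley (ZMod (p ^ α))).edgeSet → Fin k),
      IsStrongEdgeColoring (unitaryCayley (ZMod (p ^ α))) C → Function.Injective C := by
  intro k C hC e f hCef
  by_contra hne
  obtain ⟨a, b, hab, he⟩ := UCaux.edge_rep _ e
  obtain ⟨c, d, hcd, hf⟩ := UCaux.edge_rep _ f
  refine hC e f hne ?_ hCef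
  have hma : a ∈ (e : Sym2 (ZMod (p ^ α))) := by rw [he]; exact Sym2.mem_mk_left a b
  have hmb : b ∈ (e : Sym2 (ZMod (p ^ α))) := by rw [he]; exact Sym2.mem_mk_right a b
  have hmc : c ∈ (f : Sym2 (ZMod (p ^ α))) := by rw [hf]; exact Sym2.mem_mk_left c d
  rcases UCaux.dom p α hp hα a b hab c with h | h | h | h
  · exact ⟨a, c, hma, hmc, Or.inl h.symm⟩
  · exact ⟨b, c, hmb, hmc, Or.inl h.symm⟩
  · exact ⟨a, c, hma, hmc, Or.inr h.symm⟩
  · exact ⟨b, c, hmb, hmc, Or.inr h.symm⟩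

theorem unitaryCayley_strongChromaticIndex (p α : ℕ) (hp : p.Prime) (hα : 0 < α) :
    (∀ a b : ZMod (p ^ α), (unitaryCayley (ZMod (p ^ α))).Adj a b →
        ∀ v, v = a ∨ v = b ∨ (unitaryCayley (ZMod (p ^ α))).Adj v a ∨
          (unitaryCayley (ZMod (p ^ α))).Adj v b) ∧
      (∀ (k : ℕ) (C : (unitaryCayley (ZMod (p ^ α))).edgeSet → Fin k),
        IsStrongEdgeColoring (unitaryCayley (ZMod (p ^ α))) C → Function.Injective C) ∧
      strongChromaticIndex (unitaryCayley (ZMod (p ^ α))) =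
        p ^ (2 * α - 1) * (p - 1) / 2 := by
  refine ⟨UCaux.dom p α hp hα, UCaux.inj p α hp hα, ?_⟩
  haveI : NeZero (p ^ α) := ⟨(pow_pos hp.pos α).ne'⟩
  haveI : Fact (1 < p ^ α) := ⟨Nat.one_lt_pow hα.ne' hp.one_lt⟩
  set G := unitaryCayley (ZMod (p ^ α)) with hG
  haveI : DecidableRel G.Adj := Classical.decRel _
  -- degree of every vertex is the totient
  have hdeg : ∀ v : ZMod (p ^ α), G.degree v = Nat.totient (p ^ α) := by
    intro v
    rw [← SimpleGraph.card_neighborSet_eq_degree, ← ZMod.card_units_eq_totient]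
    refine Fintype.card_congr ?_
    have hadj : ∀ w, w ∈ G.neighborSet v ↔ IsUnit (v - w) := by
      intro w
      constructor
      · intro h; exact h.2
      · intro h
        refine ⟨fun hvw => ?_, h⟩
        rw [hvw, sub_self] at h
        exact not_isUnit_zero h
    exact ((Equiv.subLeft v).subtypeEquiv (fun w => by
        simpa using hadj w)).trans (UCaux.unitsEquivSubtype _).symm
  have hsum : ∑ v : ZMod (p ^ α), G.degree v = p ^ α * Nat.totient (p ^ α) := by
    rw [Finset.sum_congr rfl fun v _ => hdeg v, Finset.sum_const, Finset.card_univ,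
      ZMod.card, smul_eq_mul]
  have h2E : 2 * G.edgeFinset.card = p ^ (2 * α - 1) * (p - 1) := by
    rw [← SimpleGraph.sum_degrees_eq_twice_card_edges, hsum,
      Nat.totient_prime_pow hp hα, ← mul_assoc, ← pow_add]
    congr 2
    omega
  have hSCI : strongChromaticIndex G = G.edgeFinset.card := by
    have hcard : Fintype.card G.edgeSet = G.edgeFinset.card := (Set.toFinset_card _).symm
    apply le_antisymm
    · apply Nat.sInf_le
      refine ⟨(Fintype.equivFin G.edgeSet).trans (finCongr hcard), ?_⟩
      intro e f hne _ hc
      exact hne (((Fintype.equivFin G.edgeSet).trans (finCongr hcard)).injective hc)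
    · refine le_csInf ⟨G.edgeFinset.card,
        (Fintype.equivFin G.edgeSet).trans (finCongr hcard), ?_⟩ ?_
      · intro e f hne _ hc
        exact hne (((Fintype.equivFin G.edgeSet).trans (finCongr hcard)).injective hc)
      · rintro k ⟨C, hC⟩
        have hinj := UCaux.inj p α hp hα k C hC
        calc G.edgeFinset.card = Fintype.card G.edgeSet := hcard.symm
          _ ≤ Fintype.card (Fin k) := Fintype.card_le_of_injective C hinj
          _ = k := Fintype.card_fin k
  omega
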